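/- The curves x⁴ − x²y² + Ky⁴ = 1, K < 1/4, are not singular at infinity: for every real number K < 1/4 and every point p ∈ ℝ² with p ≠ 0, p in the closure of the cone ℝ_{>0}·H_{0,K}, and h_{0,K}(p) = 0, the differential of h_{0,K} at p is nonzero. -/

import Mathlib

/-!
Common definitions: the quartic polynomial `hLK L K (x,y) = x⁴ − x²y² + L·x·y³ + K·y⁴` on ℝ²,
the Hessian determinant of a function on ℝ², and the curve `Hcurve L K = H_{L,K}`,
the connected component containing (1,0) of the hyperbolic points on the level set {h = 1}.
-/

noncomputable section
open Matrix

/-- `h_{L,K}(x,y) = x⁴ − x²y² + L·x·y³ + K·y⁴`. -/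
def hLK (L K : ℝ) (v : Fin 2 → ℝ) : ℝ :=
  v 0 ^ 4 - v 0 ^ 2 * v 1 ^ 2 + L * v 0 * v 1 ^ 3 + K * v 1 ^ 4

/-- Determinant of the Hessian matrix of `f : ℝ² → ℝ` at `p`. -/
def hessDet2 (f : (Fin 2 → ℝ) → ℝ) (p : Fin 2 → ℝ) : ℝ :=
  Matrix.det (Matrix.of fun i j : Fin 2 =>
    iteratedFDeriv ℝ 2 f p ![Pi.single i 1, Pi.single j 1])

/-- `H_{L,K}`: the connected component containing `(1,0)` of
`{p ∈ ℝ² : h_{L,K}(p) = 1 and p is a hyperbolic point of h_{L,K}}`. -/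
def Hcurve (L K : ℝ) : Set (Fin 2 → ℝ) :=
  connectedComponentIn {p | hLK L K p = 1 ∧ hessDet2 (hLK L K) p < 0} ![1, 0]

/-- **The curves `x⁴ − x²y² + Ky⁴ = 1` with `K < 1/4` are not singular at infinity.**
For every `K < 1/4` and every nonzero point `p` in the closure of the cone
`ℝ_{>0}·H_{0,K}` with `h_{0,K}(p) = 0`, the differential of `h_{0,K}` at `p` is nonzero. -/
theorem family_d_not_singular_at_infinity (K : ℝ) (hK : K < 1/4)
    (p : Fin 2 → ℝ) (hp0 : p ≠ 0)
    (hpc : p ∈ closure {x : Fin 2 → ℝ | ∃ l : ℝ, 0 < l ∧ ∃ q ∈ Hcurve 0 K, x = l • q})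
    (hpz : hLK 0 K p = 0) :
    fderiv ℝ (hLK 0 K) p ≠ 0 := by
  intro hf
  have h0 : HasFDerivAt (fun v : Fin 2 → ℝ => v 0)
      (ContinuousLinearMap.proj 0 : (Fin 2 → ℝ) →L[ℝ] ℝ) p := hasFDerivAt_apply 0 p
  have h1 : HasFDerivAt (fun v : Fin 2 → ℝ => v 1)
      (ContinuousLinearMap.proj 1 : (Fin 2 → ℝ) →L[ℝ] ℝ) p := hasFDerivAt_apply 1 p
  have H := ((((h0.mul h0).mul h0).mul h0).sub
      (((h0.mul h0)).mul ((h1.mul h1)))).add ((((h1.mul h1).mul h1).mul h1).const_mul K)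
  have hfun : hLK 0 K = fun v : Fin 2 → ℝ =>
      v 0 * v 0 * v 0 * v 0 - v 0 * v 0 * (v 1 * v 1) + K * (v 1 * v 1 * v 1 * v 1) := by
    funext v; simp [hLK]; ring
  rw [hfun] at hf
  rw [(show HasFDerivAt (fun v : Fin 2 → ℝ =>
      v 0 * v 0 * v 0 * v 0 - v 0 * v 0 * (v 1 * v 1) + K * (v 1 * v 1 * v 1 * v 1)) _ p
      from H).fderiv] at hf
  have e0 := DFunLike.congr_fun hf (Pi.single (0 : Fin 2) (1:ℝ))
  have e1 := DFunLike.congr_fun hf (Pi.single (1 : Fin 2) (1:ℝ))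
  simp [Pi.single_apply] at e0 e1
  clear hf H hfun h0 h1
  -- e0 : ∂h/∂x = 0 (up to rearrangement), e1 : ∂h/∂y = 0
  have hpz' : p 0 ^ 4 - p 0 ^ 2 * p 1 ^ 2 + K * p 1 ^ 4 = 0 := by
    have := hpz; simp [hLK] at this; linarith
  have hx : 4 * p 0 ^ 3 - 2 * p 0 * p 1 ^ 2 = 0 := by nlinarith [e0]
  have hy : -2 * p 0 ^ 2 * p 1 + 4 * K * p 1 ^ 3 = 0 := by nlinarith [e1]
  -- First show p 0 = 0 would be forced only when K = 0
  have hx0 : p 0 = 0 := by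
    by_contra hx0
    rcases eq_or_ne (p 1) 0 with hy0 | hy0
    · rw [hy0] at hx
      have h3 : p 0 ^ 3 = 0 := by linarith
      exact hx0 (by simpa using pow_eq_zero_iff (n := 3) (by norm_num) |>.mp h3)
    · -- p 0 ≠ 0, p 1 ≠ 0 : from hx, 2 (p 0)^2 = (p 1)^2, then hpz' gives (4K-1) p0^4 = 0
      have h2' : p 0 * (4 * p 0 ^ 2 - 2 * p 1 ^ 2) = 0 := by linear_combination hx
      have h2 : 2 * p 0 ^ 2 = p 1 ^ 2 := by
        rcases mul_eq_zero.mp h2' with h | h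
        · exact absurd h hx0
        · linarith
      have : p 0 ^ 4 * (4 * K - 1) = 0 := by linear_combination hpz' + (K * p 1 ^ 2 - p 0 ^ 2 + 2 * K * p 0 ^ 2) * h2
      have h4 : p 0 ^ 4 ≠ 0 := pow_ne_zero 4 hx0
      have : 4 * K - 1 = 0 := by
        rcases mul_eq_zero.mp this with h | h
        · exact absurd h h4
        · exact h
      linarith
  -- Now K * (p 1)^4 = 0 from hpz', and p 1 ≠ 0 since p ≠ 0, so K = 0
  have hy0 : p 1 ≠ 0 := by
    intro hy0
    apply hp0
    funext i
    fin_cases i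
    · exact hx0
    · exact hy0
  have hK0 : K = 0 := by
    have hK4 : K * p 1 ^ 4 = 0 := by
      rw [hx0] at hpz'; linarith [hpz']
    rcases mul_eq_zero.mp hK4 with h | h
    · exact h
    · exact absurd h (pow_ne_zero 4 hy0)
  -- Cone over Hcurve 0 0 lies in the closed set {v | (v 1)^2 ≤ (v 0)^2}
  have hsub : {x : Fin 2 → ℝ | ∃ l : ℝ, 0 < l ∧ ∃ q ∈ Hcurve 0 K, x = l • q} ⊆
      {v : Fin 2 → ℝ | (v 1) ^ 2 ≤ (v 0) ^ 2} := by
    rintro v ⟨l, hl, q, hq, rfl⟩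
    have hq1 : hLK 0 K q = 1 :=
      (connectedComponentIn_subset {p | hLK 0 K p = 1 ∧ hessDet2 (hLK 0 K) p < 0} ![1,0] hq).1
    have hq1' : q 0 ^ 4 - q 0 ^ 2 * q 1 ^ 2 = 1 := by
      simp [hLK, hK0] at hq1; linarith
    have hle : q 1 ^ 2 ≤ q 0 ^ 2 := by nlinarith [sq_nonneg (q 0), sq_nonneg (q 1)]
    simp only [Set.mem_setOf_eq, Pi.smul_apply, smul_eq_mul]
    nlinarith [sq_nonneg l]
  have hclosed : IsClosed {v : Fin 2 → ℝ | (v 1) ^ 2 ≤ (v 0) ^ 2} :=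
    isClosed_le (by fun_prop) (by fun_prop)
  have hpC : p ∈ {v : Fin 2 → ℝ | (v 1) ^ 2 ≤ (v 0) ^ 2} :=
    hclosed.closure_subset ((closure_mono hsub) hpc)
  have : p 1 ^ 2 ≤ 0 := by
    have := hpC; simp only [Set.mem_setOf_eq, hx0] at this; simpa using this
  exact hy0 (by nlinarith [sq_nonneg (p 1)])
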